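/- Let C_{ab}^d, ρ₁_a^i, ρ₂_a^i : ℝⁿ → ℝ be smooth functions. On ℝⁿ × ℝᵐ with coordinates (x^i, ξ_a) define, for smooth F, G : ℝⁿ × ℝᵐ → ℝ, the bracket [F,G]_Λ = Σ_{a,b,d} C_{ab}^d(x) ξ_d (∂F/∂ξ_a)(∂G/∂ξ_b) + Σ_{a,i} ρ₁_a^i(x) (∂F/∂ξ_a)(∂G/∂x^i) − Σ_{a,i} ρ₂_a^i(x) (∂F/∂x^i)(∂G/∂ξ_a). For a smooth section σ : ℝⁿ → ℝᵐ let i_σ(x,ξ) = Σ_a ξ_a σ^a(x), and define [σ₁,σ₂]^d = Σ_{a,b} C_{ab}^d σ₁^a σ₂^b + Σ_{a,i} ρ₁_a^i σ₁^a ∂σ₂^d/∂x^i − Σ_{a,i} ρ₂_a^i σ₂^a ∂σ₁^d/∂x^i. Then for all smooth sections σ₁, σ₂ : ℝⁿ → ℝᵐ one has i_{[σ₁,σ₂]} = [i_{σ₁}, i_{σ₂}]_Λ as functions on ℝⁿ × ℝᵐ. -/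

import Mathlib

/-- Partial derivative `∂F/∂x^i` of `F : ℝⁿ × ℝᵐ → ℝ` at `p = (x,ξ)`. -/
noncomputable def pdx {n m : ℕ} (F : (Fin n → ℝ) × (Fin m → ℝ) → ℝ) (i : Fin n)
    (p : (Fin n → ℝ) × (Fin m → ℝ)) : ℝ :=
  fderiv ℝ F p (Pi.single i 1, 0)

/-- Partial derivative `∂F/∂ξ_a` of `F : ℝⁿ × ℝᵐ → ℝ` at `p = (x,ξ)`. -/
noncomputable def pdξ {n m : ℕ} (F : (Fin n → ℝ) × (Fin m → ℝ) → ℝ) (a : Fin m)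
    (p : (Fin n → ℝ) × (Fin m → ℝ)) : ℝ :=
  fderiv ℝ F p (0, Pi.single a 1)

/-- The `i`-th partial derivative of a function `f : ℝⁿ → ℝ` at `x`. -/
noncomputable def pd {n : ℕ} (f : (Fin n → ℝ) → ℝ) (i : Fin n) (x : Fin n → ℝ) : ℝ :=
  fderiv ℝ f x (Pi.single i 1)

/-- The bracket on `C^∞(ℝⁿ × ℝᵐ)` associated to the linear 2-contravariant tensor field `Λ`
with structure functions `C x a b d = C_{ab}^d(x)` and anchors `ρ₁ x a i = ρ₁_a^i(x)`,
`ρ₂ x a i = ρ₂_a^i(x)`: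
`[F,G]_Λ = Σ C_{ab}^d ξ_d ∂F/∂ξ_a ∂G/∂ξ_b + Σ ρ₁_a^i ∂F/∂ξ_a ∂G/∂x^i
           − Σ ρ₂_a^i ∂F/∂x^i ∂G/∂ξ_a`. -/
noncomputable def ΛBracket {n m : ℕ}
    (C : (Fin n → ℝ) → Fin m → Fin m → Fin m → ℝ)
    (ρ₁ ρ₂ : (Fin n → ℝ) → Fin m → Fin n → ℝ)
    (F G : (Fin n → ℝ) × (Fin m → ℝ) → ℝ) (p : (Fin n → ℝ) × (Fin m → ℝ)) : ℝ :=
  (∑ a, ∑ b, ∑ d, C p.1 a b d * p.2 d * pdξ F a p * pdξ G b p)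
    + (∑ a, ∑ i, ρ₁ p.1 a i * pdξ F a p * pdx G i p)
    - (∑ a, ∑ i, ρ₂ p.1 a i * pdx F i p * pdξ G a p)

/-- The fiberwise-linear function `i_σ(x,ξ) = Σ_a ξ_a σ^a(x)` induced by a section `σ`. -/
noncomputable def iSec {n m : ℕ} (σ : (Fin n → ℝ) → Fin m → ℝ)
    (p : (Fin n → ℝ) × (Fin m → ℝ)) : ℝ :=
  ∑ a, p.2 a * σ p.1 a

/-- The Leibniz algebroid bracket of sections `σ₁, σ₂ : ℝⁿ → ℝᵐ`. -/
noncomputable def secBracket {n m : ℕ}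
    (C : (Fin n → ℝ) → Fin m → Fin m → Fin m → ℝ)
    (ρ₁ ρ₂ : (Fin n → ℝ) → Fin m → Fin n → ℝ)
    (σ₁ σ₂ : (Fin n → ℝ) → Fin m → ℝ) (x : Fin n → ℝ) (d : Fin m) : ℝ :=
  (∑ a, ∑ b, C x a b d * σ₁ x a * σ₂ x b)
    + (∑ a, ∑ i, ρ₁ x a i * σ₁ x a * pd (fun y => σ₂ y d) i x)
    - (∑ a, ∑ i, ρ₂ x a i * σ₂ x a * pd (fun y => σ₁ y d) i x)

lemma iSec_hasFDerivAt {n m : ℕ} (σ : (Fin n → ℝ) → Fin m → ℝ)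
    (hσ : ∀ a, ContDiff ℝ (⊤ : ℕ∞) fun x => σ x a) (p : (Fin n → ℝ) × (Fin m → ℝ)) :
    HasFDerivAt (iSec σ)
      (∑ a, (p.2 a • ((fderiv ℝ (fun x => σ x a) p.1).comp
          (ContinuousLinearMap.fst ℝ (Fin n → ℝ) (Fin m → ℝ)))
        + σ p.1 a • ((ContinuousLinearMap.proj a).comp
          (ContinuousLinearMap.snd ℝ (Fin n → ℝ) (Fin m → ℝ))))) p := by
  unfold iSec
  apply HasFDerivAt.fun_sum
  intro a _
  have h1 : HasFDerivAt (fun q : (Fin n → ℝ) × (Fin m → ℝ) => σ q.1 a)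
      ((fderiv ℝ (fun x => σ x a) p.1).comp
        (ContinuousLinearMap.fst ℝ (Fin n → ℝ) (Fin m → ℝ))) p :=
    (((hσ a).differentiable (by simp) p.1).hasFDerivAt).comp p (hasFDerivAt_fst)
  have h2 : HasFDerivAt (fun q : (Fin n → ℝ) × (Fin m → ℝ) => q.2 a)
      ((ContinuousLinearMap.proj a).comp
        (ContinuousLinearMap.snd ℝ (Fin n → ℝ) (Fin m → ℝ))) p :=
    ((ContinuousLinearMap.proj a).comp
        (ContinuousLinearMap.snd ℝ (Fin n → ℝ) (Fin m → ℝ))).hasFDerivAt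
  exact h2.mul h1

lemma pdξ_iSec {n m : ℕ} (σ : (Fin n → ℝ) → Fin m → ℝ)
    (hσ : ∀ a, ContDiff ℝ (⊤ : ℕ∞) fun x => σ x a) (a : Fin m)
    (p : (Fin n → ℝ) × (Fin m → ℝ)) :
    pdξ (iSec σ) a p = σ p.1 a := by
  rw [pdξ, (iSec_hasFDerivAt σ hσ p).fderiv]
  simp [ContinuousLinearMap.sum_apply, Pi.single_apply]

lemma pdx_iSec {n m : ℕ} (σ : (Fin n → ℝ) → Fin m → ℝ)
    (hσ : ∀ a, ContDiff ℝ (⊤ : ℕ∞) fun x => σ x a) (i : Fin n)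
    (p : (Fin n → ℝ) × (Fin m → ℝ)) :
    pdx (iSec σ) i p = ∑ b, p.2 b * pd (fun y => σ y b) i p.1 := by
  rw [pdx, (iSec_hasFDerivAt σ hσ p).fderiv]
  simp [ContinuousLinearMap.sum_apply, pd]

/-- `i_{[σ₁,σ₂]} = [i_{σ₁}, i_{σ₂}]_Λ` as functions on `ℝⁿ × ℝᵐ`. -/
theorem stmt_7 {n m : ℕ}
    (C : (Fin n → ℝ) → Fin m → Fin m → Fin m → ℝ)
    (ρ₁ ρ₂ : (Fin n → ℝ) → Fin m → Fin n → ℝ)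
    (hC : ∀ a b d, ContDiff ℝ (⊤ : ℕ∞) fun x => C x a b d)
    (hρ₁ : ∀ a i, ContDiff ℝ (⊤ : ℕ∞) fun x => ρ₁ x a i)
    (hρ₂ : ∀ a i, ContDiff ℝ (⊤ : ℕ∞) fun x => ρ₂ x a i)
    (σ₁ σ₂ : (Fin n → ℝ) → Fin m → ℝ)
    (hσ₁ : ∀ a, ContDiff ℝ (⊤ : ℕ∞) fun x => σ₁ x a)
    (hσ₂ : ∀ a, ContDiff ℝ (⊤ : ℕ∞) fun x => σ₂ x a) :
    ∀ p : (Fin n → ℝ) × (Fin m → ℝ),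
      (∑ d, p.2 d * secBracket C ρ₁ ρ₂ σ₁ σ₂ p.1 d)
        = ΛBracket C ρ₁ ρ₂ (iSec σ₁) (iSec σ₂) p := by
  intro p
  simp only [ΛBracket, pdξ_iSec σ₁ hσ₁, pdξ_iSec σ₂ hσ₂, pdx_iSec σ₁ hσ₁, pdx_iSec σ₂ hσ₂,
    secBracket, mul_add, mul_sub, Finset.sum_add_distrib, Finset.sum_sub_distrib,
    Finset.mul_sum, Finset.sum_mul]
  congr 1
  · congr 1
    · rw [Finset.sum_comm]
      refine Finset.sum_congr rfl fun a _ => ?_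
      rw [Finset.sum_comm]
      exact Finset.sum_congr rfl fun b _ => Finset.sum_congr rfl fun d _ => by ring
    · rw [Finset.sum_comm]
      refine Finset.sum_congr rfl fun a _ => ?_
      rw [Finset.sum_comm]
      exact Finset.sum_congr rfl fun i _ => Finset.sum_congr rfl fun d _ => by ring
  · rw [Finset.sum_comm]
    refine Finset.sum_congr rfl fun a _ => ?_
    rw [Finset.sum_comm]
    exact Finset.sum_congr rfl fun i _ => Finset.sum_congr rfl fun d _ => by ring
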